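/- Fix p ∈ (1,∞). For every such p there exists a real number z > 1 such that the (unique) global minimizer (f̂₁, f̂₂) of G_z over ℝ² satisfies f̂₁ < f̂₂. (This is the core of the paper's Lemma 2: L(p,1) aggregation with p ∈ (1,∞) violates efficiency, since the paper's two-paper, three-reviewer construction reduces exactly to minimizing G_z.) -/

import Mathlib

open Real Filter Set Topology

/-- The `L(p,1)` loss of the aggregate scores `(f₁, f₂)` for two papers whose three
reviewers give overall recommendations `(z, 0, 0)` and `(0, 1, 0)` respectively. -/
noncomputable def G (p z : ℝ) (f : ℝ × ℝ) : ℝ :=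
  (|z - f.1| ^ p + |f.2| ^ p) ^ (1 / p) +
    (|f.1| ^ p + |1 - f.2| ^ p) ^ (1 / p) +
    (|f.1| ^ p + |f.2| ^ p) ^ (1 / p)

noncomputable def Np (p x y : ℝ) : ℝ := (|x| ^ p + |y| ^ p) ^ (1 / p)

variable {p : ℝ}

lemma base_nonneg (x y : ℝ) : 0 ≤ |x| ^ p + |y| ^ p := by positivity

lemma Np_nonneg (p x y : ℝ) : 0 ≤ Np p x y := Real.rpow_nonneg (base_nonneg x y) _

lemma rpow_rpow_inv (hp : 0 < p) {x : ℝ} (hx : 0 ≤ x) : (x ^ p) ^ (1/p) = x := by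
  rw [← Real.rpow_mul hx, mul_one_div, div_self hp.ne', Real.rpow_one]

lemma abs_le_Np_left (hp : 0 < p) (x y : ℝ) : |x| ≤ Np p x y := by
  have : (|x| ^ p) ^ (1/p) ≤ Np p x y :=
    Real.rpow_le_rpow (by positivity) (by simp [base_nonneg, le_add_iff_nonneg_right]; positivity)
      (by positivity)
  rwa [rpow_rpow_inv hp (abs_nonneg x)] at this

lemma abs_le_Np_right (hp : 0 < p) (x y : ℝ) : |y| ≤ Np p x y := by
  have : (|y| ^ p) ^ (1/p) ≤ Np p x y :=
    Real.rpow_le_rpow (by positivity) (by simp [le_add_iff_nonneg_left]; positivity)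
      (by positivity)
  rwa [rpow_rpow_inv hp (abs_nonneg y)] at this

lemma Np_le (hp : 0 < p) {x y x' y' : ℝ} (hx : |x| ≤ |x'|) (hy : |y| ≤ |y'|) :
    Np p x y ≤ Np p x' y' := by
  apply Real.rpow_le_rpow (base_nonneg x y) _ (by positivity)
  exact add_le_add (Real.rpow_le_rpow (abs_nonneg x) hx hp.le)
    (Real.rpow_le_rpow (abs_nonneg y) hy hp.le)

lemma Np_smul (hp : 0 < p) {c : ℝ} (hc : 0 ≤ c) (x y : ℝ) :
    Np p (c*x) (c*y) = c * Np p x y := by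
  unfold Np
  rw [abs_mul, abs_mul, abs_of_nonneg hc, Real.mul_rpow hc (abs_nonneg x),
    Real.mul_rpow hc (abs_nonneg y), ← mul_add,
    Real.mul_rpow (by positivity) (base_nonneg x y), rpow_rpow_inv hp hc]

lemma Np_pos (hp : 0 < p) {x y : ℝ} (h : x ≠ 0 ∨ y ≠ 0) : 0 < Np p x y := by
  rcases h with h | h
  · exact lt_of_lt_of_le (abs_pos.2 h) (abs_le_Np_left hp x y)
  · exact lt_of_lt_of_le (abs_pos.2 h) (abs_le_Np_right hp x y)

lemma G_eq (p z : ℝ) (f : ℝ × ℝ) :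
    (fun f : ℝ × ℝ => (|z - f.1| ^ p + |f.2| ^ p) ^ (1 / p) +
      (|f.1| ^ p + |1 - f.2| ^ p) ^ (1 / p) +
      (|f.1| ^ p + |f.2| ^ p) ^ (1 / p)) f
    = Np p (z - f.1) f.2 + Np p f.1 (1 - f.2) + Np p f.1 f.2 := rfl

lemma continuous_abs_rpow (hp : 1 < p) : Continuous (fun x : ℝ => |x| ^ p) := by
  have := (differentiable_norm_rpow (E := ℝ) hp).continuous
  simpa [Real.norm_eq_abs] using this



-- x^q - y^q ≤ q * (x - y) for 0 ≤ y ≤ x ≤ 1, 1 ≤ q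
lemma rpow_sub_rpow_le {q x y : ℝ} (hq : 1 ≤ q) (h0 : 0 ≤ y) (hyx : y ≤ x) (hx1 : x ≤ 1) :
    x ^ q - y ^ q ≤ q * (x - y) := by
  rcases eq_or_lt_of_le hyx with rfl | hlt
  · simp
  · obtain ⟨c, hc, hc'⟩ := exists_hasDerivAt_eq_slope (fun t => t ^ q) (fun t => q * t ^ (q-1))
      hlt (by
        apply ContinuousOn.rpow_const continuousOn_id
        intro t ht
        right; positivity)
      (fun t ht => Real.hasDerivAt_rpow_const (Or.inr hq))
    have hc0 : 0 < c := lt_of_le_of_lt h0 hc.1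
    have hcb : q * c ^ (q - 1) ≤ q := by
      have : c ^ (q - 1) ≤ 1 :=
        Real.rpow_le_one hc0.le (le_trans hc.2.le hx1) (by linarith)
      nlinarith [hc0.le, (by linarith : (0:ℝ) < q)]
    have h2 : (x ^ q - y ^ q) / (x - y) ≤ q := hc' ▸ hcb
    rw [div_le_iff₀ (by linarith : (0:ℝ) < x - y)] at h2
    linarith

lemma rpow_add_le_taylor {s A B : ℝ} (hs : 0 < s) (hs1 : s ≤ 1) (hA : 0 < A) (hB : 0 ≤ B) :
    (A + B) ^ s ≤ A ^ s + s * A ^ (s - 1) * B := by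
  rcases eq_or_lt_of_le hB with rfl | hB'
  · simp
  · obtain ⟨c, hc, hc'⟩ := exists_hasDerivAt_eq_slope (fun t => t ^ s) (fun t => s * t ^ (s-1))
      (by linarith : A < A + B)
      (by
        apply ContinuousOn.rpow_const continuousOn_id
        intro t ht
        left
        have h1 := ht.1
        simp only [id_eq]
        intro h; rw [h] at h1; linarith)
      (fun t ht => Real.hasDerivAt_rpow_const (Or.inl (by intro h; rw [h] at ht; exact absurd ht.1 (by linarith))))
    have hcA : A < c := hc.1
    have hder : s * c ^ (s - 1) ≤ s * A ^ (s - 1) := by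
      have : c ^ (s-1) ≤ A ^ (s-1) :=
        Real.rpow_le_rpow_of_nonpos hA hcA.le (by linarith)
      nlinarith
    have h2 : ((A+B) ^ s - A ^ s) / (A + B - A) ≤ s * A ^ (s-1) := hc' ▸ hder
    have hBB : (0:ℝ) < A + B - A := by linarith
    rw [div_le_iff₀ hBB] at h2
    have : A + B - A = B := by ring
    rw [this] at h2
    linarith

lemma rpow_inv_rpow' (hp : 0 < p) {x : ℝ} (hx : 0 ≤ x) : (x ^ (1/p)) ^ p = x := by
  rw [← Real.rpow_mul hx, one_div, inv_mul_cancel₀ hp.ne', Real.rpow_one]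

lemma Np_pow_base (hp : 0 < p) (x y : ℝ) : (Np p x y) ^ p = |x| ^ p + |y| ^ p :=
  rpow_inv_rpow' hp (base_nonneg x y)

-- coordinatewise convexity chain (non-strict)
lemma coord_convex (hp : 1 < p) {t : ℝ} (ht0 : 0 ≤ t) (ht1 : t ≤ 1) (a b : ℝ) :
    |t * a + (1 - t) * b| ^ p ≤ t * |a| ^ p + (1 - t) * |b| ^ p := by
  have h1 : |t * a + (1 - t) * b| ≤ t * |a| + (1 - t) * |b| := by
    calc |t * a + (1 - t) * b| ≤ |t * a| + |(1 - t) * b| := abs_add_le _ _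
    _ = t * |a| + (1 - t) * |b| := by
        rw [abs_mul t a, abs_mul (1-t) b, abs_of_nonneg ht0,
          abs_of_nonneg (show (0:ℝ) ≤ 1 - t by linarith)]
  have h2 : |t * a + (1 - t) * b| ^ p ≤ (t * |a| + (1 - t) * |b|) ^ p :=
    Real.rpow_le_rpow (abs_nonneg _) h1 (by linarith)
  refine h2.trans ?_
  rcases eq_or_lt_of_le ht0 with rfl | ht0'
  · simp
  rcases eq_or_lt_of_le ht1 with rfl | ht1'
  · simp
  have := (convexOn_rpow hp.le).2 (mem_Ici.2 (abs_nonneg a)) (mem_Ici.2 (abs_nonneg b))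
    ht0 (by linarith : (0:ℝ) ≤ 1 - t) (by ring)
  simpa using this

lemma coord_convex_strict (hp : 1 < p) {t : ℝ} (ht0 : 0 < t) (ht1 : t < 1) {a b : ℝ}
    (hab : |a| ≠ |b|) :
    |t * a + (1 - t) * b| ^ p < t * |a| ^ p + (1 - t) * |b| ^ p := by
  have h1 : |t * a + (1 - t) * b| ≤ t * |a| + (1 - t) * |b| := by
    calc |t * a + (1 - t) * b| ≤ |t * a| + |(1 - t) * b| := abs_add_le _ _
    _ = t * |a| + (1 - t) * |b| := by
        rw [abs_mul t a, abs_mul (1-t) b, abs_of_nonneg ht0.le,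
          abs_of_nonneg (show (0:ℝ) ≤ 1 - t by linarith)]
  have h2 : |t * a + (1 - t) * b| ^ p ≤ (t * |a| + (1 - t) * |b|) ^ p :=
    Real.rpow_le_rpow (abs_nonneg _) h1 (by linarith)
  refine h2.trans_lt ?_
  have := (strictConvexOn_rpow hp).2 (mem_Ici.2 (abs_nonneg a)) (mem_Ici.2 (abs_nonneg b))
    hab ht0 (by linarith : (0:ℝ) < 1 - t) (by ring)
  simpa using this

-- from Np ≤ 1 deduce base ≤ 1
lemma base_le_one (hp : 0 < p) {A1 A2 : ℝ} (h : Np p A1 A2 ≤ 1) : |A1| ^ p + |A2| ^ p ≤ 1 := by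
  unfold Np at h
  have := Real.rpow_le_rpow (Real.rpow_nonneg (base_nonneg (p := p) A1 A2) _) h hp.le
  rwa [Real.one_rpow, rpow_inv_rpow' hp (base_nonneg (p := p) A1 A2)] at this

lemma one_le_base (hp : 0 < p) {A1 A2 : ℝ} (h : 1 ≤ Np p A1 A2) : 1 ≤ |A1| ^ p + |A2| ^ p := by
  unfold Np at h
  have := Real.rpow_le_rpow (by norm_num) h hp.le
  rwa [Real.one_rpow, rpow_inv_rpow' hp (base_nonneg (p := p) A1 A2)] at this

-- unit sphere combination: non-strict
lemma unit_combo_le (hp : 1 < p) {t : ℝ} (ht0 : 0 ≤ t) (ht1 : t ≤ 1) {A1 A2 B1 B2 : ℝ}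
    (hA : Np p A1 A2 ≤ 1) (hB : Np p B1 B2 ≤ 1) :
    Np p (t * A1 + (1 - t) * B1) (t * A2 + (1 - t) * B2) ≤ 1 := by
  have hp0 : (0:ℝ) < p := by linarith
  have hbA := base_le_one hp0 hA
  have hbB := base_le_one hp0 hB
  have hbase : |t * A1 + (1 - t) * B1| ^ p + |t * A2 + (1 - t) * B2| ^ p ≤ 1 := by
    have c1 := coord_convex hp ht0 ht1 A1 B1
    have c2 := coord_convex hp ht0 ht1 A2 B2
    nlinarith
  calc Np p _ _ ≤ (1:ℝ) ^ (1/p) :=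
        Real.rpow_le_rpow (base_nonneg _ _) hbase (by positivity)
    _ = 1 := Real.one_rpow _

-- unit sphere combination: strict
lemma unit_combo_lt (hp : 1 < p) {t : ℝ} (ht0 : 0 < t) (ht1 : t < 1) {A1 A2 B1 B2 : ℝ}
    (hA : Np p A1 A2 = 1) (hB : Np p B1 B2 = 1) (hne : (A1, A2) ≠ (B1, B2)) :
    Np p (t * A1 + (1 - t) * B1) (t * A2 + (1 - t) * B2) < 1 := by
  have hp0 : (0:ℝ) < p := by linarith
  have hbA := base_le_one hp0 hA.le
  have hbA' : 1 ≤ |A1| ^ p + |A2| ^ p := one_le_base hp0 hA.ge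
  have hbB := base_le_one hp0 hB.le
  have hbB' : 1 ≤ |B1| ^ p + |B2| ^ p := one_le_base hp0 hB.ge
  have hbase : |t * A1 + (1 - t) * B1| ^ p + |t * A2 + (1 - t) * B2| ^ p < 1 := by
    by_cases h1 : |A1| = |B1|
    · by_cases h2 : |A2| = |B2|
      · -- some coordinate has A = -B ≠ 0
        have hex : (A1 = -B1 ∧ B1 ≠ 0) ∨ (A2 = -B2 ∧ B2 ≠ 0) := by
          rcases abs_eq_abs.1 h1 with e1 | e1
          · rcases abs_eq_abs.1 h2 with e2 | e2
            · exact absurd (Prod.ext e1 e2) hne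
            · right
              constructor
              · exact e2
              · intro hB0
                apply hne
                exact Prod.ext e1 (by rw [e2, hB0]; ring)
          · by_cases hB10 : B1 = 0
            · rcases abs_eq_abs.1 h2 with e2 | e2
              · exact absurd (Prod.ext (by rw [e1, hB10]; ring) e2) hne
              · right
                refine ⟨e2, fun hB0 => hne (Prod.ext (by rw [e1, hB10]; ring) (by rw [e2, hB0]; ring))⟩
            · exact Or.inl ⟨e1, hB10⟩
        have key : ∀ a b : ℝ, a = -b → b ≠ 0 →
            |t * a + (1 - t) * b| ^ p < t * |a| ^ p + (1 - t) * |b| ^ p := by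
          intro a b hab hb0
          have : |t * a + (1 - t) * b| = |1 - 2*t| * |b| := by
            rw [hab]; rw [← abs_mul]; ring_nf
          have hlt : |t * a + (1 - t) * b| < |b| := by
            rw [this]
            have h2t : |1 - 2*t| < 1 := by
              rw [abs_lt]; constructor <;> linarith
            have := abs_pos.2 hb0
            nlinarith
          have habs : |a| = |b| := by rw [hab, abs_neg]
          calc |t * a + (1 - t) * b| ^ p < |b| ^ p :=
                Real.rpow_lt_rpow (abs_nonneg _) hlt hp0
            _ = t * |a| ^ p + (1 - t) * |b| ^ p := by rw [habs]; ring
        rcases hex with ⟨e, hb⟩ | ⟨e, hb⟩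
        · have c1 := key A1 B1 e hb
          have c2 := coord_convex hp ht0.le ht1.le A2 B2
          nlinarith
        · have c2 := key A2 B2 e hb
          have c1 := coord_convex hp ht0.le ht1.le A1 B1
          nlinarith
      · have c2 := coord_convex_strict hp ht0 ht1 h2
        have c1 := coord_convex hp ht0.le ht1.le A1 B1
        nlinarith
    · have c1 := coord_convex_strict hp ht0 ht1 h1
      have c2 := coord_convex hp ht0.le ht1.le A2 B2
      nlinarith
  calc Np p _ _ < 1 := Real.rpow_lt_one (base_nonneg _ _) hbase (by positivity)

lemma Np_eq_zero (hp : 0 < p) {x y : ℝ} (h : Np p x y = 0) : x = 0 ∧ y = 0 := by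
  constructor
  · have := abs_le_Np_left hp x y
    rw [h] at this
    exact abs_eq_zero.1 (le_antisymm this (abs_nonneg x))
  · have := abs_le_Np_right hp x y
    rw [h] at this
    exact abs_eq_zero.1 (le_antisymm this (abs_nonneg y))

lemma Np_mid_le (hp : 1 < p) (u1 u2 v1 v2 : ℝ) :
    Np p ((u1+v1)/2) ((u2+v2)/2) ≤ Np p u1 u2 / 2 + Np p v1 v2 / 2 := by
  have hp0 : (0:ℝ) < p := by linarith
  rcases eq_or_lt_of_le (Np_nonneg p u1 u2) with hNu | hNu
  · obtain ⟨e1, e2⟩ := Np_eq_zero hp0 hNu.symm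
    subst e1; subst e2
    have : Np p ((0+v1)/2) ((0+v2)/2) = (1/2) * Np p v1 v2 := by
      rw [show (0+v1)/2 = (1/2) * v1 by ring, show (0+v2)/2 = (1/2) * v2 by ring,
        Np_smul hp0 (by norm_num)]
    rw [this, ← hNu]
    ring_nf
    exact le_refl _
  rcases eq_or_lt_of_le (Np_nonneg p v1 v2) with hNv | hNv
  · obtain ⟨e1, e2⟩ := Np_eq_zero hp0 hNv.symm
    subst e1; subst e2
    have : Np p ((u1+0)/2) ((u2+0)/2) = (1/2) * Np p u1 u2 := by
      rw [show (u1+0)/2 = (1/2) * u1 by ring, show (u2+0)/2 = (1/2) * u2 by ring,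
        Np_smul hp0 (by norm_num)]
    rw [this, ← hNv]
    ring_nf
    exact le_refl _
  set Nu := Np p u1 u2 with hNudef
  set Nv := Np p v1 v2 with hNvdef
  have hS : 0 < Nu + Nv := by linarith
  set t := Nu / (Nu + Nv) with htdef
  have ht0 : 0 < t := div_pos hNu hS
  have ht1 : t < 1 := by
    rw [htdef, div_lt_one hS]; linarith
  have hA : Np p (u1/Nu) (u2/Nu) = 1 := by
    rw [show u1/Nu = Nu⁻¹ * u1 by ring, show u2/Nu = Nu⁻¹ * u2 by ring,
      Np_smul hp0 (by positivity), ← hNudef, inv_mul_cancel₀ hNu.ne']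
  have hB : Np p (v1/Nv) (v2/Nv) = 1 := by
    rw [show v1/Nv = Nv⁻¹ * v1 by ring, show v2/Nv = Nv⁻¹ * v2 by ring,
      Np_smul hp0 (by positivity), ← hNvdef, inv_mul_cancel₀ hNv.ne']
  have key := unit_combo_le hp ht0.le ht1.le hA.le hB.le
  have e1 : (u1+v1)/2 = ((Nu+Nv)/2) * (t * (u1/Nu) + (1-t) * (v1/Nv)) := by
    rw [htdef]
    field_simp
    ring
  have e2 : (u2+v2)/2 = ((Nu+Nv)/2) * (t * (u2/Nu) + (1-t) * (v2/Nv)) := by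
    rw [htdef]
    field_simp
    ring
  rw [e1, e2, Np_smul hp0 (by positivity)]
  calc ((Nu+Nv)/2) * Np p _ _ ≤ ((Nu+Nv)/2) * 1 := by
        apply mul_le_mul_of_nonneg_left key (by positivity)
    _ = Nu/2 + Nv/2 := by ring

lemma Np_mid_eq (hp : 1 < p) {u1 u2 v1 v2 : ℝ}
    (heq : Np p ((u1+v1)/2) ((u2+v2)/2) = Np p u1 u2 / 2 + Np p v1 v2 / 2) :
    ∃ l : ℝ, 0 ≤ l ∧ ((u1 = l * v1 ∧ u2 = l * v2) ∨ (v1 = l * u1 ∧ v2 = l * u2)) := by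
  have hp0 : (0:ℝ) < p := by linarith
  rcases eq_or_lt_of_le (Np_nonneg p u1 u2) with hNu | hNu
  · obtain ⟨e1, e2⟩ := Np_eq_zero hp0 hNu.symm
    exact ⟨0, le_refl 0, Or.inl ⟨by rw [e1]; ring, by rw [e2]; ring⟩⟩
  rcases eq_or_lt_of_le (Np_nonneg p v1 v2) with hNv | hNv
  · obtain ⟨e1, e2⟩ := Np_eq_zero hp0 hNv.symm
    exact ⟨0, le_refl 0, Or.inr ⟨by rw [e1]; ring, by rw [e2]; ring⟩⟩
  set Nu := Np p u1 u2 with hNudef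
  set Nv := Np p v1 v2 with hNvdef
  have hS : 0 < Nu + Nv := by linarith
  set t := Nu / (Nu + Nv) with htdef
  have ht0 : 0 < t := div_pos hNu hS
  have ht1 : t < 1 := by
    rw [htdef, div_lt_one hS]; linarith
  have hA : Np p (u1/Nu) (u2/Nu) = 1 := by
    rw [show u1/Nu = Nu⁻¹ * u1 by ring, show u2/Nu = Nu⁻¹ * u2 by ring,
      Np_smul hp0 (by positivity), ← hNudef, inv_mul_cancel₀ hNu.ne']
  have hB : Np p (v1/Nv) (v2/Nv) = 1 := by
    rw [show v1/Nv = Nv⁻¹ * v1 by ring, show v2/Nv = Nv⁻¹ * v2 by ring,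
      Np_smul hp0 (by positivity), ← hNvdef, inv_mul_cancel₀ hNv.ne']
  by_cases hAB : ((u1/Nu : ℝ), (u2/Nu : ℝ)) = ((v1/Nv : ℝ), (v2/Nv : ℝ))
  · refine ⟨Nu/Nv, by positivity, Or.inl ⟨?_, ?_⟩⟩
    · have := congrArg Prod.fst hAB
      field_simp at this ⊢
      linarith [this]
    · have := congrArg Prod.snd hAB
      field_simp at this ⊢
      linarith [this]
  · exfalso
    have key := unit_combo_lt hp ht0 ht1 hA hB hAB
    have e1 : (u1+v1)/2 = ((Nu+Nv)/2) * (t * (u1/Nu) + (1-t) * (v1/Nv)) := by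
      rw [htdef]
      field_simp
      ring
    have e2 : (u2+v2)/2 = ((Nu+Nv)/2) * (t * (u2/Nu) + (1-t) * (v2/Nv)) := by
      rw [htdef]
      field_simp
      ring
    rw [e1, e2, Np_smul hp0 (by positivity)] at heq
    nlinarith [key, hS]

lemma G_as_Np (p z : ℝ) (f : ℝ × ℝ) :
    G p z f = Np p (z - f.1) f.2 + Np p f.1 (1 - f.2) + Np p f.1 f.2 := rfl

lemma Np_x_zero (hp : 1 < p) {x : ℝ} (hx : 0 ≤ x) : Np p x 0 = x := by
  unfold Np
  rw [abs_zero, Real.zero_rpow (by linarith : p ≠ 0), add_zero,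
    rpow_rpow_inv (by linarith : (0:ℝ) < p) (abs_nonneg x), abs_of_nonneg hx]

lemma Np_zero_y (hp : 1 < p) {y : ℝ} (hy : 0 ≤ y) : Np p 0 y = y := by
  unfold Np
  rw [abs_zero, Real.zero_rpow (by linarith : p ≠ 0), zero_add,
    rpow_rpow_inv (by linarith : (0:ℝ) < p) (abs_nonneg y), abs_of_nonneg hy]

lemma continuous_G (hp : 1 < p) (z : ℝ) : Continuous (G p z) := by
  have habs : Continuous fun x : ℝ => |x| ^ p := by
    have := (differentiable_norm_rpow (E := ℝ) hp).continuous
    simpa [Real.norm_eq_abs] using this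
  have hq : (0:ℝ) ≤ 1/p := by positivity
  have c1 : Continuous fun f : ℝ × ℝ => (|z - f.1| ^ p + |f.2| ^ p) ^ (1/p) :=
    ((habs.comp (continuous_const.sub continuous_fst)).add
      (habs.comp continuous_snd)).rpow_const fun _ => Or.inr hq
  have c2 : Continuous fun f : ℝ × ℝ => (|f.1| ^ p + |1 - f.2| ^ p) ^ (1/p) :=
    ((habs.comp continuous_fst).add
      (habs.comp (continuous_const.sub continuous_snd))).rpow_const fun _ => Or.inr hq
  have c3 : Continuous fun f : ℝ × ℝ => (|f.1| ^ p + |f.2| ^ p) ^ (1/p) :=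
    ((habs.comp continuous_fst).add (habs.comp continuous_snd)).rpow_const fun _ => Or.inr hq
  exact (c1.add c2).add c3

lemma G_zero_zero (hp : 1 < p) {z : ℝ} (hz : 0 ≤ z) : G p z (0, 0) = z + 1 := by
  rw [G_as_Np]
  simp only []
  rw [show z - (0:ℝ) = z by ring, show (1:ℝ) - 0 = 1 by ring]
  rw [Np_x_zero hp hz, Np_zero_y hp zero_le_one, Np_x_zero hp (le_refl 0)]
  ring

lemma exists_min (hp : 1 < p) {z : ℝ} (hz : 1 < z) : ∃ m : ℝ × ℝ, ∀ f, G p z m ≤ G p z f := by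
  apply (continuous_G hp z).exists_forall_le' (0, 0)
  rw [Filter.eventually_iff]
  rw [Filter.mem_cocompact]
  refine ⟨Metric.closedBall 0 (z + 2), isCompact_closedBall _ _, fun f hf => ?_⟩
  simp only [Set.mem_compl_iff, Metric.mem_closedBall, dist_zero_right, not_le] at hf
  have hnorm : ‖f‖ = max ‖f.1‖ ‖f.2‖ := rfl
  have h3 : Np p f.1 f.2 ≥ z + 2 := by
    rcases max_cases ‖f.1‖ ‖f.2‖ with ⟨h, _⟩ | ⟨h, _⟩
    · have := abs_le_Np_left (by linarith : (0:ℝ) < p) f.1 f.2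
      rw [← Real.norm_eq_abs] at this
      rw [hnorm, h] at hf
      linarith
    · have := abs_le_Np_right (by linarith : (0:ℝ) < p) f.1 f.2
      rw [← Real.norm_eq_abs] at this
      rw [hnorm, h] at hf
      linarith
  have h1 := Np_nonneg p (z - f.1) f.2
  have h2 := Np_nonneg p f.1 (1 - f.2)
  rw [Set.mem_setOf_eq, G_zero_zero hp (by linarith), G_as_Np]
  linarith


lemma cross_of_mid_eq (hp : 1 < p) {u1 u2 v1 v2 : ℝ}
    (heq : Np p ((u1+v1)/2) ((u2+v2)/2) = Np p u1 u2 / 2 + Np p v1 v2 / 2) :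
    u1 * v2 - u2 * v1 = 0 := by
  obtain ⟨l, -, ⟨e1, e2⟩ | ⟨e1, e2⟩⟩ := Np_mid_eq hp heq
  · rw [e1, e2]; ring
  · rw [e1, e2]; ring

lemma min_unique (hp : 1 < p) {z : ℝ} (hz : 1 < z) {x y : ℝ × ℝ}
    (hx : ∀ f, G p z x ≤ G p z f) (hy : ∀ f, G p z y ≤ G p z f) : x = y := by
  by_contra hne
  set m : ℝ × ℝ := ((x.1 + y.1)/2, (x.2 + y.2)/2) with hm
  have hxy : G p z x = G p z y := le_antisymm (hx y) (hy x)
  -- the three Minkowski inequalities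
  have i1 : Np p (z - m.1) m.2 ≤ Np p (z - x.1) x.2 / 2 + Np p (z - y.1) y.2 / 2 := by
    have := Np_mid_le hp (z - x.1) x.2 (z - y.1) y.2
    rw [show ((z - x.1) + (z - y.1))/2 = z - (x.1 + y.1)/2 by ring] at this
    exact this
  have i2 : Np p m.1 (1 - m.2) ≤ Np p x.1 (1 - x.2) / 2 + Np p y.1 (1 - y.2) / 2 := by
    have := Np_mid_le hp x.1 (1 - x.2) y.1 (1 - y.2)
    rw [show ((1 - x.2) + (1 - y.2))/2 = 1 - (x.2 + y.2)/2 by ring] at this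
    exact this
  have i3 : Np p m.1 m.2 ≤ Np p x.1 x.2 / 2 + Np p y.1 y.2 / 2 := Np_mid_le hp x.1 x.2 y.1 y.2
  have hGm : G p z x ≤ G p z m := hx m
  rw [G_as_Np p z x, G_as_Np p z y] at hxy
  rw [G_as_Np p z x, G_as_Np p z m] at hGm
  -- equality in each term
  have e1 : Np p (z - m.1) m.2 = Np p (z - x.1) x.2 / 2 + Np p (z - y.1) y.2 / 2 := by linarith
  have e2 : Np p m.1 (1 - m.2) = Np p x.1 (1 - x.2) / 2 + Np p y.1 (1 - y.2) / 2 := by linarith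
  have e3 : Np p m.1 m.2 = Np p x.1 x.2 / 2 + Np p y.1 y.2 / 2 := by linarith
  -- cross products vanish
  have c3 : x.1 * y.2 - x.2 * y.1 = 0 := cross_of_mid_eq hp e3
  have c2 : x.1 * (1 - y.2) - (1 - x.2) * y.1 = 0 := by
    apply cross_of_mid_eq hp
    rw [show (x.1 + y.1)/2 = m.1 from rfl, show ((1 - x.2) + (1 - y.2))/2 = 1 - m.2 by
      rw [hm]; ring]
    exact e2
  have c1 : (z - x.1) * y.2 - x.2 * (z - y.1) = 0 := by
    apply cross_of_mid_eq hp
    rw [show ((z - x.1) + (z - y.1))/2 = z - m.1 by rw [hm]; ring,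
      show (x.2 + y.2)/2 = m.2 from rfl]
    exact e1
  -- algebra: x = y
  have hx1 : x.1 = y.1 := by nlinarith [c1, c2, c3]
  have hx2 : x.2 = y.2 := by
    have hz0 : z ≠ 0 := by linarith
    have : z * (y.2 - x.2) = 0 := by nlinarith [c1, c3]
    have := mul_eq_zero.1 this
    rcases this with h | h
    · exact absurd h hz0
    · linarith
  exact hne (Prod.ext hx1 hx2)


lemma clamp_abs {lo hi w c : ℝ} (h1 : lo ≤ c) (h2 : c ≤ hi) :
    |max lo (min w hi) - c| ≤ |w - c| := by
  rcases le_total w lo with hw | hw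
  · have : min w hi = w := min_eq_left (by linarith)
    rw [this, max_eq_left hw]
    rw [abs_of_nonpos (by linarith), abs_of_nonpos (by linarith)]
    linarith
  rcases le_total hi w with hw' | hw'
  · have : min w hi = hi := min_eq_right hw'
    rw [this, max_eq_right (by linarith)]
    rw [abs_of_nonneg (by linarith), abs_of_nonneg (by linarith)]
    linarith
  · have : min w hi = w := min_eq_left hw'
    rw [this, max_eq_right hw]

lemma G_clamp_le (hp : 1 < p) {z : ℝ} (hz : 1 < z) (f : ℝ × ℝ) :
    G p z (max 0 (min f.1 z), max 0 (min f.2 1)) ≤ G p z f := by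
  have hp0 : (0:ℝ) < p := by linarith
  set a' := max 0 (min f.1 z)
  set b' := max 0 (min f.2 1)
  have h1 : |a'| ≤ |f.1| := by
    simpa using clamp_abs (le_refl (0:ℝ)) (by linarith : (0:ℝ) ≤ z) (w := f.1) (c := 0)
  have h2 : |z - a'| ≤ |z - f.1| := by
    rw [abs_sub_comm z a', abs_sub_comm z f.1]
    exact clamp_abs (by linarith : (0:ℝ) ≤ z) (le_refl z) (w := f.1) (c := z)
  have h3 : |b'| ≤ |f.2| := by
    simpa using clamp_abs (le_refl (0:ℝ)) (by norm_num : (0:ℝ) ≤ 1) (w := f.2) (c := 0)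
  have h4 : |1 - b'| ≤ |1 - f.2| := by
    rw [abs_sub_comm 1 b', abs_sub_comm 1 f.2]
    exact clamp_abs (by norm_num : (0:ℝ) ≤ 1) (le_refl (1:ℝ)) (w := f.2) (c := 1)
  rw [G_as_Np, G_as_Np]
  exact add_le_add (add_le_add (Np_le hp0 h2 h3) (Np_le hp0 h1 h4)) (Np_le hp0 h1 h3)

lemma min_box (hp : 1 < p) {z : ℝ} (hz : 1 < z) {m : ℝ × ℝ}
    (hm : ∀ f, G p z m ≤ G p z f) : 0 ≤ m.1 ∧ m.1 ≤ z ∧ 0 ≤ m.2 ∧ m.2 ≤ 1 := by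
  have hclamp : ∀ f, G p z (max 0 (min m.1 z), max 0 (min m.2 1)) ≤ G p z f :=
    fun f => le_trans (G_clamp_le hp hz m) (hm f)
  have heq := min_unique hp hz hclamp hm
  have e1 : max 0 (min m.1 z) = m.1 := congrArg Prod.fst heq
  have e2 : max 0 (min m.2 1) = m.2 := congrArg Prod.snd heq
  refine ⟨?_, ?_, ?_, ?_⟩
  · rw [← e1]; exact le_max_left _ _
  · by_contra h
    push_neg at h
    rw [min_eq_right (le_of_lt h), max_eq_right (by linarith)] at e1
    linarith
  · rw [← e2]; exact le_max_left _ _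
  · by_contra h
    push_neg at h
    rw [min_eq_right (le_of_lt h), max_eq_right (by norm_num)] at e2
    linarith

lemma min_first_le (hp : 1 < p) {z : ℝ} (hz : 1 < z) {m : ℝ × ℝ}
    (hm : ∀ f, G p z m ≤ G p z f) : m.1 ≤ 3/2 := by
  have hp0 : (0:ℝ) < p := by linarith
  obtain ⟨ha0, haz, hb0, hb1⟩ := min_box hp hz hm
  -- upper bound : G m ≤ G (0, 1/2) ≤ z + 3/2
  have hub : G p z (0, 1/2) ≤ z + 3/2 := by
    rw [G_as_Np]
    simp only []
    rw [show z - (0:ℝ) = z by ring, show (1:ℝ) - 1/2 = 1/2 by norm_num]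
    have hNz : Np p z (1/2) ≤ z + 1/2 := by
      unfold Np
      have hzp : (0:ℝ) < |z| ^ p := by
        have : (0:ℝ) < |z| := by rw [abs_of_pos (by linarith)]; linarith
        positivity
      have htay := rpow_add_le_taylor (by positivity : (0:ℝ) < 1/p)
        (by rw [div_le_one hp0]; linarith) hzp (by positivity : (0:ℝ) ≤ |(1/2:ℝ)| ^ p)
      have e1 : (|z| ^ p) ^ (1/p) = z := by
        rw [rpow_rpow_inv hp0 (abs_nonneg z), abs_of_pos (by linarith)]
      have e2 : (1/p) * (|z| ^ p) ^ (1/p - 1) * |(1/2:ℝ)| ^ p ≤ 1/2 := by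
        have hz1 : (1:ℝ) ≤ |z| := by rw [abs_of_pos (by linarith)]; linarith
        have k1 : (|z| ^ p) ^ (1/p - 1) ≤ 1 := by
          apply Real.rpow_le_one_of_one_le_of_nonpos
          · calc (1:ℝ) = 1 ^ p := (Real.one_rpow p).symm
              _ ≤ |z| ^ p := Real.rpow_le_rpow zero_le_one hz1 hp0.le
          · rw [sub_nonpos, div_le_one hp0]; linarith
        have k2 : |(1/2:ℝ)| ^ p ≤ 1/2 := by
          rw [show |(1/2 : ℝ)| = 1/2 by norm_num]
          calc (1/2 : ℝ) ^ p ≤ (1/2 : ℝ) ^ (1:ℝ) :=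
                Real.rpow_le_rpow_of_exponent_ge (by norm_num) (by norm_num) (by linarith)
            _ = 1/2 := Real.rpow_one _
        have k3 : (0:ℝ) < (|z| ^ p) ^ (1/p - 1) := Real.rpow_pos_of_pos hzp _
        have k4 : (1:ℝ)/p ≤ 1 := by rw [div_le_one hp0]; linarith
        have k5 : (0:ℝ) ≤ |(1/2:ℝ)| ^ p := by positivity
        calc (1/p) * (|z| ^ p) ^ (1/p - 1) * |(1/2:ℝ)| ^ p ≤ 1 * 1 * (1/2) := by
              apply mul_le_mul _ k2 k5 (by norm_num)
              apply mul_le_mul k4 k1 k3.le (by positivity)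
          _ = 1/2 := by ring
      calc (|z| ^ p + |(1/2:ℝ)| ^ p) ^ (1/p) ≤ (|z| ^ p) ^ (1/p) + (1/p) * (|z| ^ p) ^ (1/p - 1) * |(1/2:ℝ)| ^ p := htay
        _ ≤ z + 1/2 := by rw [e1]; linarith
    have hN2 : Np p 0 (1/2 : ℝ) = 1/2 := Np_zero_y hp (by norm_num)
    rw [hN2]
    linarith
  have hlb : z + m.1 ≤ G p z m := by
    rw [G_as_Np]
    have l1 : z - m.1 ≤ Np p (z - m.1) m.2 := by
      have := abs_le_Np_left hp0 (z - m.1) m.2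
      rw [abs_of_nonneg (by linarith)] at this
      exact this
    have l2 : m.1 ≤ Np p m.1 (1 - m.2) := by
      have := abs_le_Np_left hp0 m.1 (1 - m.2)
      rw [abs_of_nonneg ha0] at this
      exact this
    have l3 : m.1 ≤ Np p m.1 m.2 := by
      have := abs_le_Np_left hp0 m.1 m.2
      rw [abs_of_nonneg ha0] at this
      exact this
    linarith
  have := hm (0, 1/2)
  linarith

lemma Np_comm (p x y : ℝ) : Np p x y = Np p y x := by unfold Np; rw [add_comm]

-- Np p x y ≤ x + β^(1-p) * |y|^p for 0 < β ≤ x, β ≤ 1 not needed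
lemma Np_taylor (hp : 1 < p) {β x : ℝ} (y : ℝ) (hβ : 0 < β) (hβx : β ≤ x) :
    Np p x y ≤ x + β ^ (1 - p) * |y| ^ p := by
  have hp0 : (0:ℝ) < p := by linarith
  have hx : 0 < x := lt_of_lt_of_le hβ hβx
  have hxp : (0:ℝ) < |x| ^ p := by
    have : (0:ℝ) < |x| := by rwa [abs_of_pos hx]
    positivity
  have htay := rpow_add_le_taylor (by positivity : (0:ℝ) < 1/p)
    (by rw [div_le_one hp0]; linarith) hxp (by positivity : (0:ℝ) ≤ |y| ^ p)
  have e1 : (|x| ^ p) ^ (1/p) = x := by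
    rw [rpow_rpow_inv hp0 (abs_nonneg x), abs_of_pos hx]
  have e2 : (1/p) * (|x| ^ p) ^ (1/p - 1) * |y| ^ p ≤ β ^ (1 - p) * |y| ^ p := by
    have k1 : (|x| ^ p) ^ (1/p - 1) = x ^ (1 - p) := by
      rw [abs_of_pos hx, ← Real.rpow_mul hx.le]
      congr 1
      field_simp
    have k2 : x ^ (1 - p) ≤ β ^ (1 - p) :=
      Real.rpow_le_rpow_of_nonpos hβ hβx (by linarith)
    have k4 : (1:ℝ)/p ≤ 1 := by rw [div_le_one hp0]; linarith
    have k5 : (0:ℝ) ≤ |y| ^ p := by positivity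
    have k6 : (0:ℝ) < x ^ (1-p) := Real.rpow_pos_of_pos hx _
    calc (1/p) * (|x| ^ p) ^ (1/p - 1) * |y| ^ p ≤ 1 * (β ^ (1-p)) * |y| ^ p := by
          apply mul_le_mul _ (le_refl _) k5 (by positivity)
          rw [k1]
          apply mul_le_mul k4 k2 k6.le (by norm_num)
      _ = β ^ (1 - p) * |y| ^ p := by ring
  calc Np p x y ≤ (|x| ^ p) ^ (1/p) + (1/p) * (|x| ^ p) ^ (1/p - 1) * |y| ^ p := htay
    _ ≤ x + β ^ (1 - p) * |y| ^ p := by rw [e1]; linarith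

lemma not_min_at_origin (hp : 1 < p) {z : ℝ} (hz : 3 ≤ z) :
    ∃ f : ℝ × ℝ, G p z f < G p z (0, 0) := by
  have hp0 : (0:ℝ) < p := by linarith
  have hp1 : (0:ℝ) < p - 1 := by linarith
  have c1 : (2:ℝ) ^ (1/p : ℝ) < 2 := by
    nth_rewrite 2 [show (2:ℝ) = 2 ^ (1:ℝ) by rw [Real.rpow_one]]
    exact Real.rpow_lt_rpow_of_exponent_lt one_lt_two (by rw [div_lt_one hp0]; linarith)
  have c2 : (1:ℝ) < 2 ^ (1/p : ℝ) := by
    nth_rewrite 1 [show (1:ℝ) = 2 ^ (0:ℝ) by rw [Real.rpow_zero]]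
    exact Real.rpow_lt_rpow_of_exponent_lt one_lt_two (by positivity)
  set κ : ℝ := ((2:ℝ) - (2:ℝ) ^ (1/p : ℝ))/2 with hκdef
  have hκ0 : 0 < κ := by rw [hκdef]; linarith
  have hκ1 : κ < 1/2 := by rw [hκdef]; linarith
  set t := κ ^ (1/(p-1) : ℝ) / 4 with htdef
  have ht0 : 0 < t := by positivity
  have hκp : κ ^ (1/(p-1) : ℝ) < 1 := Real.rpow_lt_one hκ0.le (by linarith) (by positivity)
  have ht14 : t < 1/4 := by rw [htdef]; linarith
  refine ⟨(t, t), ?_⟩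
  rw [G_zero_zero hp (by linarith), G_as_Np]
  simp only []
  -- three term bounds
  have T1 : Np p (z - t) t ≤ (z - t) + 1 * |t| ^ p := by
    have := Np_taylor hp (β := 1) t one_pos (by linarith : (1:ℝ) ≤ z - t)
    rwa [Real.one_rpow] at this
  have T2 : Np p t (1 - t) ≤ (1 - t) + 2 ^ (p - 1 : ℝ) * |t| ^ p := by
    rw [Np_comm]
    have h12 : (1/2 : ℝ) ≤ 1 - t := by linarith
    have := Np_taylor hp (β := 1/2) t (by norm_num) h12
    have e : ((1:ℝ)/2) ^ (1 - p : ℝ) = 2 ^ (p - 1 : ℝ) := by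
      rw [one_div, ← Real.rpow_neg_one 2, ← Real.rpow_mul (by norm_num : (0:ℝ) ≤ 2)]
      congr 1
      ring
    rwa [e] at this
  have T3 : Np p t t = 2 ^ (1/p : ℝ) * t := by
    unfold Np
    rw [← two_mul, Real.mul_rpow (by norm_num) (by positivity),
      rpow_rpow_inv hp0 (abs_nonneg t), abs_of_pos ht0]
  -- (1 + 2^(p-1)) * t^p < 2 κ t
  have habs : |t| = t := abs_of_pos ht0
  have key : (1 + 2 ^ (p - 1 : ℝ)) * t ^ p < 2 * κ * t := by
    have k1 : (1:ℝ) + 2 ^ (p - 1 : ℝ) ≤ 2 ^ (p : ℝ) := by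
      have h1 : (1:ℝ) ≤ 2 ^ (p - 1 : ℝ) := by
        nth_rewrite 1 [show (1:ℝ) = 2 ^ (0:ℝ) by rw [Real.rpow_zero]]
        exact Real.rpow_le_rpow_of_exponent_le one_le_two (by linarith)
      have h2 : (2:ℝ) ^ (p : ℝ) = 2 ^ (p - 1 : ℝ) + 2 ^ (p - 1 : ℝ) := by
        rw [← two_mul, show (p:ℝ) = (p - 1) + 1 by ring, Real.rpow_add (by norm_num) _ 1,
          Real.rpow_one]
        ring
      linarith
    have k2 : (2:ℝ) ^ (p:ℝ) * t ^ p = (2*t) ^ (p - 1 : ℝ) * (2*t) := by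
      rw [← Real.mul_rpow (by norm_num) ht0.le]
      rw [show (2*t) ^ (p - 1 : ℝ) * (2*t) = (2*t) ^ (p - 1 : ℝ) * (2*t) ^ (1:ℝ) by
        rw [Real.rpow_one]]
      rw [← Real.rpow_add (by positivity) _ 1]
      congr 1
      ring
    have k3 : (2*t) ^ (p - 1 : ℝ) < κ := by
      have hκq : 0 < κ ^ (1/(p-1) : ℝ) := Real.rpow_pos_of_pos hκ0 _
      have h2t : 2*t < κ ^ (1/(p-1) : ℝ) := by rw [htdef]; linarith
      have hlt := Real.rpow_lt_rpow (by linarith : (0:ℝ) ≤ 2*t) h2t hp1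
      rwa [rpow_inv_rpow' hp1 hκ0.le] at hlt
    have k4 : (0:ℝ) < 2*t := by linarith
    have k5 : t ^ p ≥ 0 := Real.rpow_nonneg ht0.le p
    calc (1 + 2 ^ (p - 1 : ℝ)) * t ^ p ≤ 2 ^ (p:ℝ) * t ^ p := by nlinarith
      _ = (2*t) ^ (p - 1 : ℝ) * (2*t) := k2
      _ < κ * (2*t) := by nlinarith
      _ = 2 * κ * t := by ring
  have goal : Np p (z - t) t + Np p t (1 - t) + Np p t t < z + 1 := by
    rw [habs] at T1 T2
    rw [T3]
    have h2κ : 2 * κ = 2 - 2 ^ (1/p : ℝ) := by rw [hκdef]; ring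
    nlinarith [T1, T2, key]
  exact goal

-- derivative helpers
lemma hda_abs {p : ℝ} (hp : 1 < p) (x : ℝ) :
    HasDerivAt (fun w : ℝ => |w| ^ p) (p * |x| ^ (p-2) * x) x :=
  hasDerivAt_abs_rpow x hp

lemma hda_abs_sub {p : ℝ} (hp : 1 < p) (c x : ℝ) :
    HasDerivAt (fun w : ℝ => |c - w| ^ p) (-(p * |c - x| ^ (p-2) * (c - x))) x := by
  have h1 : HasDerivAt (fun w : ℝ => c - w) (-1) x := (hasDerivAt_id x).const_sub c
  have h2 : HasDerivAt (fun w : ℝ => |c - w| ^ p) (p * |c - x| ^ (p-2) * (c - x) * -1) x :=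
    (hasDerivAt_abs_rpow (c - x) hp).comp x h1
  convert h2 using 1
  ring

lemma abs_two_mul_self {p : ℝ} (hp : 1 < p) {x : ℝ} (hx : 0 ≤ x) :
    |x| ^ (p-2) * x = x ^ (p-1) := by
  rcases eq_or_lt_of_le hx with rfl | hx'
  · rw [mul_zero, Real.zero_rpow (by linarith : p - 1 ≠ 0)]
  · rw [abs_of_pos hx']
    nth_rewrite 2 [show x = x ^ (1:ℝ) from (Real.rpow_one x).symm]
    rw [← Real.rpow_add hx']
    congr 1
    ring

lemma sq_val {p q : ℝ} (hp : 1 < p) (hq : q = p/(p-1)) {x r : ℝ} (hx : 0 ≤ x) (hr : 0 < r) :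
    (x ^ (p-1) * r ^ (1/p - 1)) ^ q = x ^ p * r⁻¹ := by
  have hp1 : (0:ℝ) < p - 1 := by linarith
  have hp0 : (0:ℝ) < p := by linarith
  rw [Real.mul_rpow (Real.rpow_nonneg hx _) (Real.rpow_nonneg hr.le _)]
  rw [← Real.rpow_mul hx, ← Real.rpow_mul hr.le]
  have e1 : (p - 1) * q = p := by rw [hq]; field_simp
  have e2 : (1/p - 1) * q = -1 := by
    rw [hq]
    field_simp
    ring
  rw [e1, e2, Real.rpow_neg_one]


set_option maxHeartbeats 2000000 in
lemma min_snd_lt {p q z : ℝ} (hp : 1 < p) (hq : q = p/(p-1)) (hz3 : 3 ≤ z)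
    (hzq : q * (z - 3/2) ^ (1 - p : ℝ) < 1/2 - (1 - (2:ℝ) ^ (-(1/q) : ℝ)) ^ q)
    {m : ℝ × ℝ} (hm : ∀ f, G p z m ≤ G p z f) : m.1 < m.2 := by
  have hp0 : (0:ℝ) < p := by linarith
  have hp1 : (0:ℝ) < p - 1 := by linarith
  have hq1 : 1 < q := by rw [hq, lt_div_iff₀ hp1]; linarith
  have hq0 : (0:ℝ) < q := by linarith
  by_contra hlt
  push_neg at hlt  -- hlt : m.2 ≤ m.1
  obtain ⟨ha0, haz, hb0, hb1⟩ := min_box hp (by linarith) hm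
  have ha32 : m.1 ≤ 3/2 := min_first_le hp (by linarith) hm
  set a := m.1 with hadef
  set b := m.2 with hbdef
  have hmeta : (a, b) = m := rfl
  -- a > 0
  have ha' : 0 < a := by
    rcases eq_or_lt_of_le ha0 with h0 | h0
    · exfalso
      have hb00 : b = 0 := le_antisymm (by linarith) hb0
      have hm00 : m = ((0:ℝ), (0:ℝ)) := by
        rw [← hmeta, ← h0, hb00]
      obtain ⟨f, hf⟩ := not_min_at_origin hp hz3
      have := hm f
      rw [hm00] at this
      linarith
    · exact h0
  have hza : 0 < z - a := by linarith
  have hb1' : 0 ≤ 1 - b := by linarith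
  -- the three radii
  set r1 := |z - a| ^ p + |b| ^ p with hr1def
  set r2 := |a| ^ p + |1 - b| ^ p with hr2def
  set r3 := |a| ^ p + |b| ^ p with hr3def
  have habs_a : |a| = a := abs_of_pos ha'
  have habs_b : |b| = b := abs_of_nonneg hb0
  have habs_za : |z - a| = z - a := abs_of_pos hza
  have habs_1b : |1 - b| = 1 - b := abs_of_nonneg hb1'
  have hr1 : 0 < r1 := by
    rw [hr1def]
    have : (0:ℝ) < |z - a| ^ p := by rw [habs_za]; positivity
    positivity
  have hr2 : 0 < r2 := by
    rw [hr2def]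
    have : (0:ℝ) < |a| ^ p := by rw [habs_a]; positivity
    positivity
  have hr3 : 0 < r3 := by
    rw [hr3def]
    have : (0:ℝ) < |a| ^ p := by rw [habs_a]; positivity
    positivity
  -- first partial derivative
  have loc1 : IsLocalMin (fun x : ℝ => G p z (x, b)) a :=
    Filter.Eventually.of_forall (fun x => hm (x, b))
  have d11 : HasDerivAt (fun x : ℝ => (|z - x| ^ p + |b| ^ p) ^ (1/p))
      (1/p * r1 ^ (1/p - 1) * (-(p * |z - a| ^ (p-2) * (z - a)))) a := by
    have h := (Real.hasDerivAt_rpow_const (p := 1/p) (Or.inl hr1.ne')).comp a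
        ((hda_abs_sub hp z a).add_const (|b| ^ p))
    exact h
  have d12 : HasDerivAt (fun x : ℝ => (|x| ^ p + |1 - b| ^ p) ^ (1/p))
      (1/p * r2 ^ (1/p - 1) * (p * |a| ^ (p-2) * a)) a := by
    have h := (Real.hasDerivAt_rpow_const (p := 1/p) (Or.inl hr2.ne')).comp a
        ((hda_abs hp a).add_const (|1 - b| ^ p))
    exact h
  have d13 : HasDerivAt (fun x : ℝ => (|x| ^ p + |b| ^ p) ^ (1/p))
      (1/p * r3 ^ (1/p - 1) * (p * |a| ^ (p-2) * a)) a := by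
    have h := (Real.hasDerivAt_rpow_const (p := 1/p) (Or.inl hr3.ne')).comp a
        ((hda_abs hp a).add_const (|b| ^ p))
    exact h
  set s1 := a ^ (p-1 : ℝ) * r3 ^ (1/p - 1 : ℝ) with hs1def
  set s2 := a ^ (p-1 : ℝ) * r2 ^ (1/p - 1 : ℝ) with hs2def
  set s3 := (z - a) ^ (p-1 : ℝ) * r1 ^ (1/p - 1 : ℝ) with hs3def
  set t1 := b ^ (p-1 : ℝ) * r3 ^ (1/p - 1 : ℝ) with ht1def
  set t2 := (1 - b) ^ (p-1 : ℝ) * r2 ^ (1/p - 1 : ℝ) with ht2def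
  set t3 := b ^ (p-1 : ℝ) * r1 ^ (1/p - 1 : ℝ) with ht3def
  have hXza : p * |z - a| ^ (p-2 : ℝ) * (z - a) = p * (z - a) ^ (p-1 : ℝ) := by
    rw [mul_assoc, abs_two_mul_self hp hza.le]
  have hXa : p * |a| ^ (p-2 : ℝ) * a = p * a ^ (p-1 : ℝ) := by
    rw [mul_assoc, abs_two_mul_self hp ha'.le]
  have hXb : p * |b| ^ (p-2 : ℝ) * b = p * b ^ (p-1 : ℝ) := by
    rw [mul_assoc, abs_two_mul_self hp hb0]
  have hX1b : p * |1 - b| ^ (p-2 : ℝ) * (1 - b) = p * (1 - b) ^ (p-1 : ℝ) := by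
    rw [mul_assoc, abs_two_mul_self hp hb1']
  have D1 : HasDerivAt (fun x : ℝ => G p z (x, b)) (s1 + s2 - s3) a := by
    have hD := (d11.add d12).add d13
    rw [hXza, hXa] at hD
    refine hD.congr_deriv ?_
    rw [hs1def, hs2def, hs3def]
    field_simp
    ring
  have E1 : s1 + s2 = s3 := by
    have := loc1.hasDerivAt_eq_zero D1
    linarith
  -- second partial derivative
  have loc2 : IsLocalMin (fun y : ℝ => G p z (a, y)) b :=
    Filter.Eventually.of_forall (fun y => hm (a, y))
  have d21 : HasDerivAt (fun y : ℝ => (|z - a| ^ p + |y| ^ p) ^ (1/p))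
      (1/p * r1 ^ (1/p - 1) * (p * |b| ^ (p-2) * b)) b := by
    have h := (Real.hasDerivAt_rpow_const (p := 1/p) (Or.inl hr1.ne')).comp b
        ((hda_abs hp b).const_add (|z - a| ^ p))
    exact h
  have d22 : HasDerivAt (fun y : ℝ => (|a| ^ p + |1 - y| ^ p) ^ (1/p))
      (1/p * r2 ^ (1/p - 1) * (-(p * |1 - b| ^ (p-2) * (1 - b)))) b := by
    have h := (Real.hasDerivAt_rpow_const (p := 1/p) (Or.inl hr2.ne')).comp b
        ((hda_abs_sub hp 1 b).const_add (|a| ^ p))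
    exact h
  have d23 : HasDerivAt (fun y : ℝ => (|a| ^ p + |y| ^ p) ^ (1/p))
      (1/p * r3 ^ (1/p - 1) * (p * |b| ^ (p-2) * b)) b := by
    have h := (Real.hasDerivAt_rpow_const (p := 1/p) (Or.inl hr3.ne')).comp b
        ((hda_abs hp b).const_add (|a| ^ p))
    exact h
  have D2 : HasDerivAt (fun y : ℝ => G p z (a, y)) (t1 + t3 - t2) b := by
    have hD := (d21.add d22).add d23
    rw [hXb, hX1b] at hD
    refine hD.congr_deriv ?_
    rw [ht1def, ht2def, ht3def]
    field_simp
    ring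
  have E2 : t1 + t3 = t2 := by
    have := loc2.hasDerivAt_eq_zero D2
    linarith
  -- q-th powers
  have hs1q : s1 ^ q = a ^ p * r3⁻¹ := by rw [hs1def]; exact sq_val hp hq ha0 hr3
  have hs2q : s2 ^ q = a ^ p * r2⁻¹ := by rw [hs2def]; exact sq_val hp hq ha0 hr2
  have hs3q : s3 ^ q = (z - a) ^ p * r1⁻¹ := by rw [hs3def]; exact sq_val hp hq hza.le hr1
  have ht1q : t1 ^ q = b ^ p * r3⁻¹ := by rw [ht1def]; exact sq_val hp hq hb0 hr3
  have ht2q : t2 ^ q = (1 - b) ^ p * r2⁻¹ := by rw [ht2def]; exact sq_val hp hq hb1' hr2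
  have ht3q : t3 ^ q = b ^ p * r1⁻¹ := by rw [ht3def]; exact sq_val hp hq hb0 hr1
  have hr1ab : r1 = (z - a) ^ p + b ^ p := by rw [hr1def, habs_za, habs_b]
  have hr2ab : r2 = a ^ p + (1 - b) ^ p := by rw [hr2def, habs_a, habs_1b]
  have hr3ab : r3 = a ^ p + b ^ p := by rw [hr3def, habs_a, habs_b]
  -- nonnegativity
  have hs1nn : 0 ≤ s1 := by
    rw [hs1def]; exact mul_nonneg (Real.rpow_nonneg ha0 _) (Real.rpow_nonneg hr3.le _)
  have hs2nn : 0 ≤ s2 := by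
    rw [hs2def]; exact mul_nonneg (Real.rpow_nonneg ha0 _) (Real.rpow_nonneg hr2.le _)
  have hs3nn : 0 ≤ s3 := by
    rw [hs3def]; exact mul_nonneg (Real.rpow_nonneg hza.le _) (Real.rpow_nonneg hr1.le _)
  have ht1nn : 0 ≤ t1 := by
    rw [ht1def]; exact mul_nonneg (Real.rpow_nonneg hb0 _) (Real.rpow_nonneg hr3.le _)
  have ht2nn : 0 ≤ t2 := by
    rw [ht2def]; exact mul_nonneg (Real.rpow_nonneg hb1' _) (Real.rpow_nonneg hr2.le _)
  have ht3nn : 0 ≤ t3 := by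
    rw [ht3def]; exact mul_nonneg (Real.rpow_nonneg hb0 _) (Real.rpow_nonneg hr1.le _)
  -- identities
  have I1 : s1 ^ q + t1 ^ q = 1 := by
    rw [hs1q, ht1q, ← add_mul, ← hr3ab, mul_inv_cancel₀ hr3.ne']
  have I2 : s2 ^ q + t2 ^ q = 1 := by
    rw [hs2q, ht2q, ← add_mul, ← hr2ab, mul_inv_cancel₀ hr2.ne']
  -- (A)  1/2 ≤ s1^q
  have hA : 1/2 ≤ s1 ^ q := by
    rw [hs1q, hr3ab]
    have hbp : b ^ p ≤ a ^ p := Real.rpow_le_rpow hb0 hlt hp0.le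
    rw [← div_eq_mul_inv, le_div_iff₀ (by rw [← hr3ab]; exact hr3)]
    rw [← hr3ab]
    rw [hr3ab]
    linarith
  -- (B) s3 ≤ 1
  have hB : s3 ≤ 1 := by
    by_contra h
    push_neg at h
    have h1 : (1:ℝ) = 1 ^ q := (Real.one_rpow q).symm
    have h2 : (1:ℝ) ^ q < s3 ^ q := Real.rpow_lt_rpow zero_le_one h hq0
    rw [Real.one_rpow] at h2
    have h3 : s3 ^ q ≤ 1 := by
      rw [hs3q, ← div_eq_mul_inv, div_le_one hr1, hr1ab]
      have : (0:ℝ) ≤ b ^ p := Real.rpow_nonneg hb0 _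
      linarith
    linarith
  -- (C) t2 ≤ 1
  have hC : t2 ≤ 1 := by
    by_contra h
    push_neg at h
    have h2 : (1:ℝ) ^ q < t2 ^ q := Real.rpow_lt_rpow zero_le_one h hq0
    rw [Real.one_rpow] at h2
    have h3 : t2 ^ q ≤ 1 := by
      rw [ht2q, ← div_eq_mul_inv, div_le_one hr2, hr2ab]
      have : (0:ℝ) ≤ a ^ p := Real.rpow_nonneg ha0 _
      linarith
    linarith
  -- (E) t2^q - t1^q ≤ q * t3
  have hE : t2 ^ q - t1 ^ q ≤ q * t3 := by
    have h1 : t1 ≤ t2 := by linarith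
    have := rpow_sub_rpow_le hq1.le ht1nn h1 hC
    have ht3e : t2 - t1 = t3 := by linarith
    rw [ht3e] at this
    exact this
  -- (D) t3 ≤ (z - 3/2)^(1-p)
  have hz32 : (0:ℝ) < z - 3/2 := by linarith
  have hD : t3 ≤ (z - 3/2) ^ (1 - p : ℝ) := by
    have step1 : t3 ^ q ≤ (z - 3/2) ^ (-p : ℝ) := by
      rw [ht3q]
      have k1 : b ^ p ≤ 1 := Real.rpow_le_one hb0 hb1 hp0.le
      have k2 : r1⁻¹ ≤ ((z - a) ^ p)⁻¹ := by
        apply inv_anti₀ (by positivity)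
        rw [hr1ab]
        have : (0:ℝ) ≤ b ^ p := Real.rpow_nonneg hb0 _
        linarith
      have k3 : ((z - a) ^ (p:ℝ))⁻¹ = (z - a) ^ (-p : ℝ) := by
        rw [Real.rpow_neg hza.le]
      have k4 : (z - a) ^ (-p : ℝ) ≤ (z - 3/2) ^ (-p : ℝ) :=
        Real.rpow_le_rpow_of_nonpos hz32 (by linarith) (by linarith)
      have k5 : (0:ℝ) ≤ r1⁻¹ := by positivity
      calc b ^ p * r1⁻¹ ≤ 1 * ((z - a) ^ p)⁻¹ := by
            apply mul_le_mul k1 k2 k5 zero_le_one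
        _ = (z - a) ^ (-p : ℝ) := by rw [one_mul, k3]
        _ ≤ (z - 3/2) ^ (-p : ℝ) := k4
    have e : ((z - 3/2 : ℝ) ^ (-p : ℝ)) ^ (1/q : ℝ) = (z - 3/2) ^ (1 - p : ℝ) := by
      rw [← Real.rpow_mul hz32.le]
      congr 1
      rw [hq]
      field_simp
      ring
    calc t3 = (t3 ^ q) ^ (1/q : ℝ) := (rpow_rpow_inv hq0 ht3nn).symm
      _ ≤ ((z - 3/2 : ℝ) ^ (-p : ℝ)) ^ (1/q : ℝ) :=
          Real.rpow_le_rpow (Real.rpow_nonneg ht3nn q) step1 (by positivity)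
      _ = (z - 3/2) ^ (1 - p : ℝ) := e
  -- (G) s2^q > (1 - 2^(-1/q))^q
  have hG : (1 - 2 ^ (-(1/q) : ℝ)) ^ q < s2 ^ q := by
    have h1 : s2 ^ q = s1 ^ q - (t2 ^ q - t1 ^ q) := by linarith
    have h2 : q * t3 ≤ q * ((z - 3/2) ^ (1 - p : ℝ)) := mul_le_mul_of_nonneg_left hD hq0.le
    linarith
  -- (H) 1 - 2^(-1/q) < s2
  have h2qle : (2:ℝ) ^ (-(1/q) : ℝ) ≤ 1 :=
    Real.rpow_le_one_of_one_le_of_nonpos one_le_two (neg_nonpos.2 (by positivity))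
  have hH : 1 - 2 ^ (-(1/q) : ℝ) < s2 := by
    by_contra h
    push_neg at h
    have := Real.rpow_le_rpow hs2nn h hq0.le
    linarith
  -- (I) 2^(-1/q) ≤ s1
  have hI : (2:ℝ) ^ (-(1/q) : ℝ) ≤ s1 := by
    have hval : ((2:ℝ) ^ (-(1/q) : ℝ)) ^ q = 1/2 := by
      rw [← Real.rpow_mul (by norm_num : (0:ℝ) ≤ 2)]
      rw [show (-(1/q)) * q = -1 by field_simp]
      rw [Real.rpow_neg_one]
      norm_num
    by_contra h
    push_neg at h
    have := Real.rpow_le_rpow hs1nn h.le hq0.le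
    rw [hval] at this
    have : s1 ^ q < 1/2 := by
      rcases eq_or_lt_of_le (Real.rpow_le_rpow hs1nn h.le hq0.le) with he | hl
      · exfalso
        have hss := Real.rpow_lt_rpow hs1nn h hq0
        rw [hval] at hss
        linarith
      · rw [hval] at hl; exact hl
    linarith
  -- contradiction
  linarith

/-- For every `p ∈ (1,∞)` there exists `z > 1` such that the unique global minimizer
`(f̂₁, f̂₂)` of `G_z` over `ℝ²` satisfies `f̂₁ < f̂₂` (violation of efficiency). -/
theorem stmt_0 (p : ℝ) (hp : 1 < p) :
    ∃ z : ℝ, 1 < z ∧ ∃ fhat : ℝ × ℝ,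
      (∀ f : ℝ × ℝ, G p z fhat ≤ G p z f) ∧
      (∀ g : ℝ × ℝ, (∀ f : ℝ × ℝ, G p z g ≤ G p z f) → g = fhat) ∧
      fhat.1 < fhat.2 := by
  have hp1 : (0:ℝ) < p - 1 := by linarith
  set q := p/(p-1) with hqdef
  have hq1 : 1 < q := by rw [hqdef, lt_div_iff₀ hp1]; linarith
  have hq0 : (0:ℝ) < q := by linarith
  -- margin c > 0
  have hval : ((2:ℝ) ^ (-(1/q) : ℝ)) ^ q = 1/2 := by
    rw [← Real.rpow_mul (by norm_num : (0:ℝ) ≤ 2),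
      show (-(1/q)) * q = -1 by field_simp, Real.rpow_neg_one]
    norm_num
  have hgt : (1:ℝ)/2 < (2:ℝ) ^ (-(1/q) : ℝ) := by
    have h : ((2:ℝ)) ^ (-1 : ℝ) < (2:ℝ) ^ (-(1/q) : ℝ) := by
      apply Real.rpow_lt_rpow_of_exponent_lt one_lt_two
      have : 1/q < 1 := by rw [div_lt_one hq0]; linarith
      linarith
    rwa [Real.rpow_neg_one, show ((2:ℝ))⁻¹ = 1/2 by norm_num] at h
  have h2qle : (2:ℝ) ^ (-(1/q) : ℝ) ≤ 1 :=
    Real.rpow_le_one_of_one_le_of_nonpos one_le_two (neg_nonpos.2 (by positivity))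
  have hcpos : 0 < 1/2 - (1 - (2:ℝ) ^ (-(1/q) : ℝ)) ^ q := by
    have h1 : (0:ℝ) ≤ 1 - (2:ℝ) ^ (-(1/q) : ℝ) := by linarith
    have h2 : 1 - (2:ℝ) ^ (-(1/q) : ℝ) < (2:ℝ) ^ (-(1/q) : ℝ) := by linarith
    have h3 := Real.rpow_lt_rpow h1 h2 hq0
    rw [hval] at h3
    linarith
  set c := 1/2 - (1 - (2:ℝ) ^ (-(1/q) : ℝ)) ^ q with hcdef
  set A := (q/c) ^ (1/(p-1) : ℝ) with hAdef
  have hApos : 0 < A := Real.rpow_pos_of_pos (by positivity) _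
  set z := 3/2 + A + 2 with hzdef
  have hz3 : 3 ≤ z := by rw [hzdef]; linarith
  have hz1 : 1 < z := by linarith
  have hzq : q * (z - 3/2) ^ (1 - p : ℝ) < c := by
    have hz32 : z - 3/2 = A + 2 := by rw [hzdef]; ring
    have h1 : A ^ (p - 1 : ℝ) = q/c := by
      rw [hAdef]
      exact rpow_inv_rpow' hp1 (by positivity)
    have h2 : A ^ (p - 1 : ℝ) < (A + 2) ^ (p - 1 : ℝ) :=
      Real.rpow_lt_rpow hApos.le (by linarith) hp1
    have h3 : q/c < (z - 3/2) ^ (p - 1 : ℝ) := by rw [hz32, ← h1]; exact h2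
    have h4 : (0:ℝ) < (z - 3/2) ^ (p - 1 : ℝ) := Real.rpow_pos_of_pos (by linarith) _
    have h5 : (z - 3/2 : ℝ) ^ (1 - p : ℝ) = ((z - 3/2) ^ (p - 1 : ℝ))⁻¹ := by
      rw [show (1 - p : ℝ) = -(p-1) by ring, Real.rpow_neg (by linarith : (0:ℝ) ≤ z - 3/2)]
    rw [h5]
    rw [div_lt_iff₀ hcpos] at h3
    rw [mul_inv_lt_iff₀' h4]
    linarith [h3]
  obtain ⟨fhat, hfhat⟩ := exists_min hp hz1
  exact ⟨z, hz1, fhat, hfhat, fun g hg => min_unique hp hz1 hg hfhat,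
    min_snd_lt hp hqdef hz3 hzq hfhat⟩
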